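/- For n = m = 4 and k = 3, the set X⁺ of 4×4 nonnegative matrices with nonnegative rank at most 3 is not convex: there exist matrices A₁, A₂ with rk₊(A₁) = rk₊(A₂) = 3 such that rk₊((A₁+A₂)/2) = 4. -/

import Mathlib

open Matrix BigOperators Filter Topology

set_option maxHeartbeats 1600000

/-- The nonnegative rank: least `k` such that `P` is a sum of `k` nonnegative dyads. -/
noncomputable def nnRank {n m : ℕ} (P : Matrix (Fin n) (Fin m) ℝ) : ℕ :=
  sInf {k : ℕ | ∃ (c : Fin k → Fin n → ℝ) (r : Fin k → Fin m → ℝ),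
    (∀ h i, 0 ≤ c h i) ∧ (∀ h j, 0 ≤ r h j) ∧
    P = ∑ h, Matrix.vecMulVec (c h) (r h)}

/-- Frobenius distance between two matrices. -/
noncomputable def frobDist {n m : ℕ} (P N : Matrix (Fin n) (Fin m) ℝ) : ℝ :=
  Real.sqrt (∑ i, ∑ j, (P i j - N i j) ^ 2)

lemma nnRank_le {n m k : ℕ} (P : Matrix (Fin n) (Fin m) ℝ)
    (c : Fin k → Fin n → ℝ) (r : Fin k → Fin m → ℝ)
    (hc : ∀ h i, 0 ≤ c h i) (hr : ∀ h j, 0 ≤ r h j)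
    (hP : P = ∑ h, Matrix.vecMulVec (c h) (r h)) : nnRank P ≤ k :=
  Nat.sInf_le ⟨c, r, hc, hr, hP⟩

lemma nnRank_le_of_nonneg {n : ℕ} (P : Matrix (Fin n) (Fin n) ℝ)
    (hP : ∀ i j, 0 ≤ P i j) : nnRank P ≤ n := by
  refine nnRank_le P (fun h i => P i h) (fun h j => if h = j then 1 else 0)
    (fun h i => hP i h) (fun h j => by positivity) ?_
  ext i j
  simp [Matrix.vecMulVec_apply, Matrix.sum_apply, mul_ite, Finset.sum_ite_eq]

lemma rank_le_of_decomp {n m k : ℕ} (P : Matrix (Fin n) (Fin m) ℝ)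
    (c : Fin k → Fin n → ℝ) (r : Fin k → Fin m → ℝ)
    (hP : P = ∑ h, Matrix.vecMulVec (c h) (r h)) : P.rank ≤ k := by
  have hCR : P = (Matrix.of fun i h => c h i) * (Matrix.of fun h j => r h j) := by
    ext i j
    simp [hP, Matrix.mul_apply, Matrix.sum_apply, Matrix.vecMulVec_apply]
  calc P.rank = ((Matrix.of fun i h => c h i) * (Matrix.of fun h j => r h j)).rank := by
        rw [← hCR]
    _ ≤ (Matrix.of fun (i : Fin n) (h : Fin k) => c h i).rank := Matrix.rank_mul_le_left _ _
    _ ≤ k := Matrix.rank_le_width _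

lemma rank_le_nnRank {n m : ℕ} (P : Matrix (Fin n) (Fin m) ℝ)
    (hne : {k : ℕ | ∃ (c : Fin k → Fin n → ℝ) (r : Fin k → Fin m → ℝ),
      (∀ h i, 0 ≤ c h i) ∧ (∀ h j, 0 ≤ r h j) ∧
      P = ∑ h, Matrix.vecMulVec (c h) (r h)}.Nonempty) :
    P.rank ≤ nnRank P := by
  obtain ⟨c, r, _, _, hP⟩ := Nat.sInf_mem hne
  exact rank_le_of_decomp P c r hP

theorem nnRank_le_three_not_convex :
    ∃ A₁ A₂ : Matrix (Fin 4) (Fin 4) ℝ,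
      (∀ i j, 0 ≤ A₁ i j) ∧ (∀ i j, 0 ≤ A₂ i j) ∧
      nnRank A₁ = 3 ∧ nnRank A₂ = 3 ∧
      nnRank ((1/2 : ℝ) • (A₁ + A₂)) = 4 := by
  set A₁ : Matrix (Fin 4) (Fin 4) ℝ :=
    !![1,0,0,0; 0,1,0,0; 0,0,1,1; 0,0,1,1] with hA₁
  set A₂ : Matrix (Fin 4) (Fin 4) ℝ :=
    !![1,0,0,0; 0,1,0,0; 0,0,1,2; 0,0,2,4] with hA₂
  have hM : (1/2 : ℝ) • (A₁ + A₂) =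
      !![1,0,0,0; 0,1,0,0; 0,0,1,(3/2 : ℝ); 0,0,3/2,5/2] := by
    ext i j; fin_cases i <;> fin_cases j <;>
      simp [hA₁, hA₂, Matrix.smul_apply, Matrix.add_apply, Matrix.vecHead, Matrix.vecTail] <;> norm_num
  set M : Matrix (Fin 4) (Fin 4) ℝ :=
    !![1,0,0,0; 0,1,0,0; 0,0,1,(3/2 : ℝ); 0,0,3/2,5/2] with hMdef
  -- decompositions of A₁ and A₂ into 3 dyads
  have hd₁ : A₁ = ∑ h : Fin 3,
      Matrix.vecMulVec (![![1,0,0,0], ![0,1,0,0], ![0,0,1,1]] h)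
        (![![1,0,0,0], ![0,1,0,0], ![0,0,1,1]] h) := by
    ext i j; fin_cases i <;> fin_cases j <;>
      simp [Fin.sum_univ_three, Matrix.vecMulVec_apply, Matrix.sum_apply, hA₁, Matrix.vecHead, Matrix.vecTail, Fin.ext_iff] <;> norm_num
  have hd₂ : A₂ = ∑ h : Fin 3,
      Matrix.vecMulVec (![![1,0,0,0], ![0,1,0,0], ![0,0,1,2]] h)
        (![![1,0,0,0], ![0,1,0,0], ![0,0,1,2]] h) := by
    ext i j; fin_cases i <;> fin_cases j <;>
      simp [Fin.sum_univ_three, Matrix.vecMulVec_apply, Matrix.sum_apply, hA₂, Matrix.vecHead, Matrix.vecTail, Fin.ext_iff] <;> norm_num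
  have hnn₁ : ∀ i j, (0:ℝ) ≤ A₁ i j := by
    intro i j; fin_cases i <;> fin_cases j <;> norm_num [hA₁, Matrix.vecHead, Matrix.vecTail]
  have hnn₂ : ∀ i j, (0:ℝ) ≤ A₂ i j := by
    intro i j; fin_cases i <;> fin_cases j <;> norm_num [hA₂, Matrix.vecHead, Matrix.vecTail]
  -- rank lower bounds via E * A * F
  have hrank3 : ∀ A : Matrix (Fin 4) (Fin 4) ℝ,
      (!![1,0,0,0; 0,1,0,0; 0,0,1,0] : Matrix (Fin 3) (Fin 4) ℝ) * A *
      (!![1,0,0; 0,1,0; 0,0,1; 0,0,0] : Matrix (Fin 4) (Fin 3) ℝ) = 1 → 3 ≤ A.rank := by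
    intro A hEAF
    have h1 : ((!![1,0,0,0; 0,1,0,0; 0,0,1,0] : Matrix (Fin 3) (Fin 4) ℝ) * A *
        (!![1,0,0; 0,1,0; 0,0,1; 0,0,0] : Matrix (Fin 4) (Fin 3) ℝ)).rank = 3 := by
      rw [hEAF, Matrix.rank_one]; simp
    calc (3:ℕ) = ((!![1,0,0,0; 0,1,0,0; 0,0,1,0] : Matrix (Fin 3) (Fin 4) ℝ) * A *
          (!![1,0,0; 0,1,0; 0,0,1; 0,0,0] : Matrix (Fin 4) (Fin 3) ℝ)).rank := h1.symm
      _ ≤ ((!![1,0,0,0; 0,1,0,0; 0,0,1,0] : Matrix (Fin 3) (Fin 4) ℝ) * A).rank :=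
          Matrix.rank_mul_le_left _ _
      _ ≤ A.rank := Matrix.rank_mul_le_right _ _
  have hEAF₁ : (!![1,0,0,0; 0,1,0,0; 0,0,1,0] : Matrix (Fin 3) (Fin 4) ℝ) * A₁ *
      (!![1,0,0; 0,1,0; 0,0,1; 0,0,0] : Matrix (Fin 4) (Fin 3) ℝ) = 1 := by
    ext i j; fin_cases i <;> fin_cases j <;>
      simp [Matrix.mul_apply, Fin.sum_univ_four, Fin.sum_univ_three, hA₁, Matrix.one_apply, Matrix.vecHead, Matrix.vecTail, Fin.ext_iff] <;> norm_num
  have hEAF₂ : (!![1,0,0,0; 0,1,0,0; 0,0,1,0] : Matrix (Fin 3) (Fin 4) ℝ) * A₂ *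
      (!![1,0,0; 0,1,0; 0,0,1; 0,0,0] : Matrix (Fin 4) (Fin 3) ℝ) = 1 := by
    ext i j; fin_cases i <;> fin_cases j <;>
      simp [Matrix.mul_apply, Fin.sum_univ_four, Fin.sum_univ_three, hA₂, Matrix.one_apply, Matrix.vecHead, Matrix.vecTail, Fin.ext_iff] <;> norm_num
  -- M is invertible
  have hMinv : M * (!![1,0,0,0; 0,1,0,0; 0,0,10,-6; 0,0,-6,4] : Matrix (Fin 4) (Fin 4) ℝ) = 1 := by
    ext i j; fin_cases i <;> fin_cases j <;>
      simp [Matrix.mul_apply, Fin.sum_univ_four, hMdef, Matrix.one_apply, Matrix.vecHead, Matrix.vecTail, Fin.ext_iff] <;> norm_num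
  have hrankM : M.rank = 4 := by
    rw [Matrix.rank_of_isUnit M ((Matrix.isUnit_iff_isUnit_det M).mpr (Matrix.isUnit_det_of_right_inverse hMinv))]; simp
  have hMnn : ∀ i j, (0:ℝ) ≤ M i j := by
    intro i j; fin_cases i <;> fin_cases j <;> norm_num [hMdef, Matrix.vecHead, Matrix.vecTail]
  refine ⟨A₁, A₂, hnn₁, hnn₂, ?_, ?_, ?_⟩
  · refine le_antisymm (nnRank_le A₁ _ _ ?_ ?_ hd₁) ?_
    · intro h i; fin_cases h <;> fin_cases i <;> norm_num [Matrix.vecHead, Matrix.vecTail]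
    · intro h j; fin_cases h <;> fin_cases j <;> norm_num [Matrix.vecHead, Matrix.vecTail]
    · calc 3 ≤ A₁.rank := hrank3 A₁ hEAF₁
        _ ≤ nnRank A₁ := rank_le_nnRank A₁ ⟨3, _, _, by
            intro h i; fin_cases h <;> fin_cases i <;> norm_num [Matrix.vecHead, Matrix.vecTail], by
            intro h j; fin_cases h <;> fin_cases j <;> norm_num [Matrix.vecHead, Matrix.vecTail], hd₁⟩
  · refine le_antisymm (nnRank_le A₂ _ _ ?_ ?_ hd₂) ?_
    · intro h i; fin_cases h <;> fin_cases i <;> norm_num [Matrix.vecHead, Matrix.vecTail]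
    · intro h j; fin_cases h <;> fin_cases j <;> norm_num [Matrix.vecHead, Matrix.vecTail]
    · calc 3 ≤ A₂.rank := hrank3 A₂ hEAF₂
        _ ≤ nnRank A₂ := rank_le_nnRank A₂ ⟨3, _, _, by
            intro h i; fin_cases h <;> fin_cases i <;> norm_num [Matrix.vecHead, Matrix.vecTail], by
            intro h j; fin_cases h <;> fin_cases j <;> norm_num [Matrix.vecHead, Matrix.vecTail], hd₂⟩
  · rw [hM]
    refine le_antisymm (nnRank_le_of_nonneg M hMnn) ?_
    calc 4 = M.rank := hrankM.symm
      _ ≤ nnRank M := rank_le_nnRank M ⟨4, fun h i => M i h,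
          fun h j => if h = j then 1 else 0, fun h i => hMnn i h,
          fun h j => by positivity, by
            ext i j
            simp [Matrix.vecMulVec_apply, Matrix.sum_apply, mul_ite, Finset.sum_ite_eq]⟩
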